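/- If a and b are coprime integers with a even, then gcd((a⁴−6a²b²+b⁴)(a²+b²)², (a²−b²)⁴) = 1. -/

import Mathlib

theorem stmt_7 (a b : ℤ) (h : IsCoprime a b) (ha : Even a) :
    IsCoprime ((a^4-6*a^2*b^2+b^4)*(a^2+b^2)^2) ((a^2-b^2)^4) := by
  -- b is odd
  have hb : Odd b := by
    rcases Int.even_or_odd b with hb | hb
    · exfalso
      have h2 : (2 : ℤ) ∣ a := ha.two_dvd
      have h2' : (2 : ℤ) ∣ b := hb.two_dvd
      have := h.isUnit_of_dvd' h2 h2'
      norm_num [Int.isUnit_iff] at this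
    · exact hb
  -- c := a^2 - b^2 is odd
  have hea : Even (a^2) := by rw [sq]; exact ha.mul_right a
  have hodd : Odd (a^2 - b^2) := hea.sub_odd (hb.pow)
  obtain ⟨k, hk⟩ := hodd
  have h2c : IsCoprime (2 : ℤ) (a^2 - b^2) := ⟨-k, 1, by linarith⟩
  have hac : IsCoprime a (a^2 - b^2) := by
    have := (h.pow_right (n := 2)).neg_right.add_mul_left_right a
    convert this using 1; rfl; ring
  have hbc : IsCoprime b (a^2 - b^2) := by
    have := (h.symm.pow_right (n := 2)).add_mul_left_right (-b)
    convert this using 1; rfl; ring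
  have key : IsCoprime ((2*(a*b))^2) (a^2 - b^2) :=
    (h2c.mul_left (hac.mul_left hbc)).pow_left
  -- first factor coprime to c
  have h1 : IsCoprime (a^4-6*a^2*b^2+b^4) (a^2 - b^2) := by
    have := key.neg_left.add_mul_right_left (a^2 - b^2)
    convert this using 1; rfl; ring
  -- second factor coprime to c
  have h2 : IsCoprime (a^2 + b^2) (a^2 - b^2) := by
    have h4 : IsCoprime (2*b^2) (a^2 - b^2) := h2c.mul_left hbc.pow_left
    have := h4.add_mul_right_left 1
    convert this using 1; rfl; ring
  exact (h1.mul_left h2.pow_left).pow_right
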